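/- arXiv:2401.05220 — 3 statements merged into one kernel-verified Lean document; each statement's English description precedes it below -/
import Mathlib

section
/- Consider the metriplectic integrator (x'−x)/h = Π(z)∇̄₂H(x,x') + K_d(z)∇S(z), where z=(x+x')/2, Π(z) is skew-symmetric, K_d(z) is symmetric positive semidefinite, and additionally Π(z)∇S(z)=0 (S is a Casimir) and ∇S = ∇̄₂S on the relevant pairs (e.g. S quadratic). Then S(x') − S(x) ≥ 0. -/
open Matrix

/-- For the metriplectic integrator
`(x'−x)/h = Π(z)∇̄₂H(x,x') + K_d(z)∇S(z)` with `z = (x+x')/2`, `Π(z)` skew-symmetric,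
`K_d(z)` symmetric positive semidefinite, `Π(z)∇S(z) = 0` (S a Casimir), and
`∇S = ∇̄₂S` on the relevant pair (e.g. `S` quadratic), one has `S(x') − S(x) ≥ 0`.
The condition `∇S = ∇̄₂S` is encoded by the discrete-gradient identity
`∇S(z) ⬝ (x'−x) = S(x') − S(x)`. -/
theorem metriplectic_integrator_second_law
    {n : ℕ} (H S : (Fin n → ℝ) → ℝ)
    (DGH : (Fin n → ℝ) → (Fin n → ℝ) → (Fin n → ℝ))
    (gradS : (Fin n → ℝ) → (Fin n → ℝ))
    (Pi Kd : (Fin n → ℝ) → Matrix (Fin n) (Fin n) ℝ)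
    (hPiskew : ∀ p, (Pi p)ᵀ = -(Pi p))
    (hKdsymm : ∀ p, (Kd p)ᵀ = Kd p)
    (hKdpos : ∀ p v : Fin n → ℝ, 0 ≤ v ⬝ᵥ (Kd p).mulVec v)
    (hPiS : ∀ p, (Pi p).mulVec (gradS p) = 0)
    (h : ℝ) (hh : 0 < h)
    (x x' : Fin n → ℝ)
    -- ∇S = ∇̄₂S at (x, x') (e.g. S quadratic):
    (hSdg : gradS ((1/2 : ℝ) • (x + x')) ⬝ᵥ (x' - x) = S x' - S x)
    (hscheme : x' - x =
      h • ((Pi ((1/2 : ℝ) • (x + x'))).mulVec (DGH x x') +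
           (Kd ((1/2 : ℝ) • (x + x'))).mulVec (gradS ((1/2 : ℝ) • (x + x'))))) :
    0 ≤ S x' - S x := by
  set z := (1/2 : ℝ) • (x + x') with hz
  rw [← hSdg, hscheme]
  have hPi : gradS z ⬝ᵥ (Pi z).mulVec (DGH x x') = 0 := by
    rw [dotProduct_mulVec, ← mulVec_transpose, hPiskew, neg_mulVec, hPiS, neg_zero,
      zero_dotProduct]
  rw [dotProduct_smul, dotProduct_add, hPi, zero_add]
  exact smul_nonneg hh.le (hKdpos z (gradS z))
end

section
/- Let ∇̄₂H(x,x') be the Gonzalez discrete gradient of H and define K_d(df,dg) := G*(∇̄₂H,∇̄₂H)[G*(∇̄₂H,∇̄₂H)G*(df,dg) − G*(∇̄₂H,df)G*(∇̄₂H,dg)] for a positive definite inner product G*. Then K_d is symmetric positive semidefinite and K_d applied to ∇̄₂H vanishes: K_d(∇̄₂H, v) = 0 for all v. Consequently the scheme (x'−x)/h = Π(z)∇̄₂H(x,x') + K_d(z)∇S(z) with Π(z) skew-symmetric satisfies H(x') = H(x). -/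
open Matrix

lemma vecMulVec_mulVec' {n : ℕ} (w v u : Fin n → ℝ) :
    (vecMulVec w v).mulVec u = (v ⬝ᵥ u) • w := by
  ext i
  simp only [vecMulVec_apply, mulVec, dotProduct, Pi.smul_apply, smul_eq_mul,
    Finset.mul_sum]
  rw [Finset.sum_mul]
  exact Finset.sum_congr rfl fun j _ => by ring

/-- With `∇̄₂H` the Gonzalez discrete gradient of `H` and
`K_d(df,dg) := G*(∇̄₂H,∇̄₂H)[G*(∇̄₂H,∇̄₂H)G*(df,dg) − G*(∇̄₂H,df)G*(∇̄₂H,dg)]` built from a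
positive definite inner product `G*` (matrix `Gm`, so `G*(u,v) = u ⬝ᵥ Gm v` and the
operator form is `K_d = c(c Gm − a aᵀ)` with `a = Gm ∇̄₂H`, `c = ∇̄₂Hᵀ Gm ∇̄₂H`),
`K_d` is symmetric positive semidefinite and kills `∇̄₂H`; consequently the scheme
`(x'−x)/h = Π(z)∇̄₂H(x,x') + K_d ∇S(z)` with `Π(z)` skew-symmetric preserves `H`. -/
theorem generic_integrator_first_law
    {n : ℕ} (H S : (Fin n → ℝ) → ℝ)
    (Gm : Matrix (Fin n) (Fin n) ℝ)
    (hGsymm : Gmᵀ = Gm)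
    (hGpos : ∀ v : Fin n → ℝ, v ≠ 0 → 0 < v ⬝ᵥ Gm.mulVec v)
    (DGH : (Fin n → ℝ) → (Fin n → ℝ) → (Fin n → ℝ))
    -- discrete gradient property of the Gonzalez discrete gradient:
    (hDG : ∀ x x' : Fin n → ℝ, DGH x x' ⬝ᵥ (x' - x) = H x' - H x)
    (gradS : (Fin n → ℝ) → (Fin n → ℝ))
    (Pi : (Fin n → ℝ) → Matrix (Fin n) (Fin n) ℝ)
    (hPiskew : ∀ p, (Pi p)ᵀ = -(Pi p))
    (h : ℝ) (x x' : Fin n → ℝ)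
    (Kd : Matrix (Fin n) (Fin n) ℝ)
    (hKd : Kd = (DGH x x' ⬝ᵥ Gm.mulVec (DGH x x')) •
      ((DGH x x' ⬝ᵥ Gm.mulVec (DGH x x')) • Gm -
        vecMulVec (Gm.mulVec (DGH x x')) (Gm.mulVec (DGH x x'))))
    (hscheme : x' - x =
      h • ((Pi ((1/2 : ℝ) • (x + x'))).mulVec (DGH x x') +
           Kd.mulVec (gradS ((1/2 : ℝ) • (x + x'))))) :
    Kdᵀ = Kd ∧
    (∀ v : Fin n → ℝ, 0 ≤ v ⬝ᵥ Kd.mulVec v) ∧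
    Kd.mulVec (DGH x x') = 0 ∧
    H x' = H x := by
  set d := DGH x x' with hd
  set a := Gm.mulVec d with ha
  set c := d ⬝ᵥ a with hc
  -- Gm positive semidefinite
  have hGpsd : ∀ v : Fin n → ℝ, 0 ≤ v ⬝ᵥ Gm.mulVec v := by
    intro v
    rcases eq_or_ne v 0 with rfl | hv
    · simp
    · exact (hGpos v hv).le
  have hc0 : 0 ≤ c := hGpsd d
  -- symmetry of the Gm-form
  have hsym : ∀ u v : Fin n → ℝ, u ⬝ᵥ Gm.mulVec v = v ⬝ᵥ Gm.mulVec u := by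
    intro u v
    rw [dotProduct_mulVec, dotProduct_comm, ← mulVec_transpose, hGsymm]
  -- Cauchy–Schwarz : (v ⬝ᵥ a)^2 ≤ c * (v ⬝ᵥ Gm v)
  have hCS : ∀ v : Fin n → ℝ, (v ⬝ᵥ a) * (v ⬝ᵥ a) ≤ c * (v ⬝ᵥ Gm.mulVec v) := by
    intro v
    have key : ∀ t : ℝ,
        0 ≤ c * (t * t) + (2 * (v ⬝ᵥ a)) * t + v ⬝ᵥ Gm.mulVec v := by
      intro t
      have := hGpsd (t • d + v)
      have h1 : (t • d + v) ⬝ᵥ Gm.mulVec (t • d + v)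
          = c * (t * t) + (2 * (v ⬝ᵥ a)) * t + v ⬝ᵥ Gm.mulVec v := by
        have h2 : d ⬝ᵥ Gm.mulVec v = v ⬝ᵥ a := hsym d v
        simp only [mulVec_add, mulVec_smul, dotProduct_add, dotProduct_smul,
          add_dotProduct, smul_dotProduct, smul_eq_mul, h2, ← ha, ← hc]
        ring
      linarith [h1 ▸ this]
    have := discrim_le_zero key
    rw [discrim] at this
    nlinarith [this]
  have hKdmul : ∀ v : Fin n → ℝ,
      Kd.mulVec v = c • (c • Gm.mulVec v - (a ⬝ᵥ v) • a) := by
    intro v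
    rw [hKd, smul_mulVec, sub_mulVec, smul_mulVec, vecMulVec_mulVec']
  have hkill : Kd.mulVec d = 0 := by
    rw [hKdmul d]
    have : a ⬝ᵥ d = c := by rw [dotProduct_comm]
    rw [this, ← ha]
    simp
  refine ⟨?_, ?_, hkill, ?_⟩
  · rw [hKd]
    simp only [transpose_smul, transpose_sub, hGsymm]
    congr 1
    congr 1
    ext i j
    simp [vecMulVec_apply, transpose_apply, mul_comm]
  · intro v
    rw [hKdmul v]
    have hav : a ⬝ᵥ v = v ⬝ᵥ a := dotProduct_comm a v
    rw [dotProduct_smul, dotProduct_sub, dotProduct_smul, dotProduct_smul, hav]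
    have := hCS v
    have hq := hGpsd v
    simp only [smul_eq_mul]
    nlinarith
  · have hKsym : Kdᵀ = Kd := by
      rw [hKd]
      simp only [transpose_smul, transpose_sub, hGsymm]
      congr 1
      congr 1
      ext i j
      simp [vecMulVec_apply, transpose_apply, mul_comm]
    have hHd : H x' - H x = d ⬝ᵥ (x' - x) := (hDG x x').symm
    rw [hscheme] at hHd
    set z := (1/2 : ℝ) • (x + x')
    have hPi0 : d ⬝ᵥ (Pi z).mulVec d = 0 := by
      have : d ⬝ᵥ (Pi z).mulVec d = (Pi z)ᵀ.mulVec d ⬝ᵥ d := by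
        rw [dotProduct_mulVec, mulVec_transpose]
      rw [hPiskew z] at this
      simp only [neg_mulVec, neg_dotProduct] at this
      have h2 : d ⬝ᵥ (Pi z).mulVec d = (Pi z).mulVec d ⬝ᵥ d := dotProduct_comm _ _
      linarith
    have hK0 : d ⬝ᵥ Kd.mulVec (gradS z) = 0 := by
      rw [dotProduct_mulVec, ← mulVec_transpose, hKsym, hkill, zero_dotProduct]
    rw [dotProduct_smul, dotProduct_add, hPi0, hK0] at hHd
    simp at hHd
    linarith
end

section
/- For the rigid body metriplectic midpoint integrator with z = (p + P)/2: (P−p)/h = Π(z)∇H(z) + K(z)∇S(z) (since H and S are quadratic, their Gonzalez discrete gradients evaluate to gradients at z), one has exactly H(P) = H(p) and S(P) − S(p) = h∇S(z)ᵀK(z)∇S(z) ≥ 0. -/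
open Matrix

set_option maxRecDepth 4000 in
/-- For the rigid body metriplectic midpoint integrator with `z = (p+P)/2`:
`(P−p)/h = Π(z)∇H(z) + K(z)∇S(z)` (since `H` and `S` are quadratic their Gonzalez discrete
gradients evaluate to gradients at `z`; `∇S(z) = z`), one has exactly `H(P) = H(p)` and
`S(P) − S(p) = h ∇S(z)ᵀK(z)∇S(z) ≥ 0`. -/
theorem rigid_body_metriplectic_integrator
    (I₁ I₂ I₃ : ℝ) (hI₁ : 0 < I₁) (hI₂ : 0 < I₂) (hI₃ : 0 < I₃)
    (H S : (Fin 3 → ℝ) → ℝ)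
    (hH : ∀ q : Fin 3 → ℝ,
      H q = (1/2 : ℝ) * ((q 0)^2 / I₁ + (q 1)^2 / I₂ + (q 2)^2 / I₃))
    (hS : ∀ q : Fin 3 → ℝ, S q = (1/2 : ℝ) * ((q 0)^2 + (q 1)^2 + (q 2)^2))
    (gradH : (Fin 3 → ℝ) → (Fin 3 → ℝ))
    (hgradH : ∀ q : Fin 3 → ℝ, gradH q = ![q 0 / I₁, q 1 / I₂, q 2 / I₃])
    (Pi K : (Fin 3 → ℝ) → Matrix (Fin 3) (Fin 3) ℝ)
    (hPi : ∀ q : Fin 3 → ℝ, Pi q =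
      !![0, -(q 2), q 1;
         q 2, 0, -(q 0);
         -(q 1), q 0, 0])
    (hK : ∀ q : Fin 3 → ℝ,
      K q = (gradH q ⬝ᵥ gradH q) • (1 : Matrix (Fin 3) (Fin 3) ℝ)
              - vecMulVec (gradH q) (gradH q))
    (h : ℝ) (hh : 0 < h)
    (p P z : Fin 3 → ℝ) (hz : z = (1/2 : ℝ) • (p + P))
    (hscheme : P - p = h • ((Pi z).mulVec (gradH z) + (K z).mulVec z)) :
    H P = H p ∧
    S P - S p = h * (z ⬝ᵥ (K z).mulVec z) ∧
    0 ≤ h * (z ⬝ᵥ (K z).mulVec z) := by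
  have hz0 : z 0 = (p 0 + P 0) / 2 := by rw [hz]; simp; ring
  have hz1 : z 1 = (p 1 + P 1) / 2 := by rw [hz]; simp; ring
  have hz2 : z 2 = (p 2 + P 2) / 2 := by rw [hz]; simp; ring
  have e0 := congrFun hscheme 0
  have e1 := congrFun hscheme 1
  have e2 := congrFun hscheme 2
  simp only [hPi, hK, hgradH, _root_.Pi.sub_apply, _root_.Pi.smul_apply, _root_.Pi.add_apply, mulVec, dotProduct,
    Fin.sum_univ_three, Matrix.sub_apply, Matrix.smul_apply, one_apply, vecMulVec_apply, smul_eq_mul,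
    cons_val_zero, cons_val_one, head_cons, head_fin_const, cons_val_two, tail_cons,
    of_apply, cons_val', empty_val', cons_val_fin_one, Fin.isValue, Fin.reduceEq,
    reduceIte, if_true, if_false] at e0 e1 e2 ⊢
  norm_num at e0 e1 e2 ⊢
  refine ⟨?_, ?_, ?_⟩
  · rw [hH P, hH p]
    rw [hz0, hz1, hz2] at e0 e1 e2
    linear_combination ((p 0 + P 0)/(2*I₁)) * e0 + ((p 1 + P 1)/(2*I₂)) * e1 + ((p 2 + P 2)/(2*I₃)) * e2
  · rw [hS P, hS p]
    rw [hz0, hz1, hz2] at e0 e1 e2 ⊢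
    linear_combination ((p 0 + P 0)/2) * e0 + ((p 1 + P 1)/2) * e1 + ((p 2 + P 2)/2) * e2
  · apply mul_nonneg hh.le
    nlinarith [sq_nonneg (z 0 / I₁ * z 1 - z 1 / I₂ * z 0), sq_nonneg (z 0 / I₁ * z 2 - z 2 / I₃ * z 0), sq_nonneg (z 1 / I₂ * z 2 - z 2 / I₃ * z 1)]
end
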